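/- Suppose the equation x(k+1) = A(k)x(k) has an exponential dichotomy on an infinite interval J with projection P(k) and constants K, α, and suppose J contains [m,∞). Then the range of P(m) equals the set of initial values of solutions bounded in forward time: R(P(m)) = { ξ ∈ ℝⁿ : sup_{k ≥ m} ‖Φ(k,m)ξ‖ < ∞ }. -/

import Mathlib

noncomputable section

open scoped BigOperators

/-- ℝⁿ as a Euclidean space. -/
abbrev Euc (n : ℕ) := EuclideanSpace ℝ (Fin n)

/-- The transition matrix `Φ(k,m) = A(k-1) ⋯ A(m)`, with `Φ(m,m) = 1`
(and `Φ(k,m) = 1` when `k ≤ m`). -/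
def Phi {n : ℕ} (A : ℤ → (Euc n →L[ℝ] Euc n)) (k m : ℤ) : Euc n →L[ℝ] Euc n :=
  (((List.range (k - m).toNat).map fun i => A (m + i)).reverse).prod

/-- `J` is an interval of integers. -/
def IsIntInterval (J : Set ℤ) : Prop :=
  ∀ ⦃a b c : ℤ⦄, a ∈ J → b ∈ J → a ≤ c → c ≤ b → c ∈ J

/-- The equation `x(k+1) = A(k) x(k)` has an exponential dichotomy on `J` with
projection family `P`, constant `K` and exponent `α`. -/
structure ExpDichotomyOn {n : ℕ} (A : ℤ → (Euc n →L[ℝ] Euc n)) (J : Set ℤ)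
    (P : ℤ → (Euc n →L[ℝ] Euc n)) (K α : ℝ) : Prop where
  one_le_K : 1 ≤ K
  alpha_pos : 0 < α
  proj : ∀ k ∈ J, P k ∘L P k = P k
  rank_const : ∀ k ∈ J, ∀ m ∈ J,
    Module.finrank ℝ (LinearMap.range (P k : Euc n →ₗ[ℝ] Euc n)) = Module.finrank ℝ (LinearMap.range (P m : Euc n →ₗ[ℝ] Euc n))
  invariance : ∀ m ∈ J, ∀ k ∈ J, m ≤ k → Phi A k m ∘L P m = P k ∘L Phi A k m
  forward : ∀ m ∈ J, ∀ k ∈ J, m ≤ k →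
    ‖Phi A k m ∘L P m‖ ≤ K * Real.exp (-α * ((k : ℝ) - (m : ℝ)))
  bijOn : ∀ k : ℤ, k ∈ J → k + 1 ∈ J →
    Set.BijOn (A k) (LinearMap.ker (P k : Euc n →ₗ[ℝ] Euc n) : Set (Euc n)) (LinearMap.ker (P (k + 1) : Euc n →ₗ[ℝ] Euc n) : Set (Euc n))
  backward : ∃ Ψ : ℤ → ℤ → (Euc n →L[ℝ] Euc n), ∀ m ∈ J, ∀ k ∈ J, m ≤ k →
    (∀ x ∈ LinearMap.ker (P m : Euc n →ₗ[ℝ] Euc n), Ψ m k (Phi A k m x) = x) ∧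
    (∀ x ∈ LinearMap.ker (P k : Euc n →ₗ[ℝ] Euc n), Ψ m k x ∈ LinearMap.ker (P m : Euc n →ₗ[ℝ] Euc n) ∧ Phi A k m (Ψ m k x) = x) ∧
    ‖Ψ m k ∘L (1 - P k)‖ ≤ K * Real.exp (-α * ((k : ℝ) - (m : ℝ)))

/-- if the equation has an exponential dichotomy on an infinite interval `J`
containing `[m, ∞)`, then `R(P(m))` is exactly the set of initial values of solutions
bounded in forward time. -/
lemma Phi_self {n : ℕ} (A : ℤ → (Euc n →L[ℝ] Euc n)) (m : ℤ) : Phi A m m = 1 := by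
  simp [Phi]

set_option maxHeartbeats 800000 in
theorem statement2 {n : ℕ} (A P : ℤ → (Euc n →L[ℝ] Euc n)) (J : Set ℤ) (K α : ℝ)
    (hJ : IsIntInterval J)
    (hED : ExpDichotomyOn A J P K α) (m : ℤ) (hm : ∀ k : ℤ, m ≤ k → k ∈ J) :
    (LinearMap.range (P m : Euc n →ₗ[ℝ] Euc n) : Set (Euc n))
      = {ξ : Euc n | ∃ C : ℝ, ∀ k : ℤ, m ≤ k → ‖Phi A k m ξ‖ ≤ C} := by
  obtain ⟨Ψ, hΨ⟩ := hED.backward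
  have hK0 : (0:ℝ) < K := lt_of_lt_of_le one_pos hED.one_le_K
  have hmJ : m ∈ J := hm m le_rfl
  have hPm : P m ∘L P m = P m := hED.proj m hmJ
  have hPmapp : ∀ x, P m (P m x) = P m x := by
    intro x
    have := congrArg (fun T : Euc n →L[ℝ] Euc n => T x) hPm
    simpa using this
  have hexp_le_one : ∀ k : ℤ, m ≤ k → Real.exp (-α * ((k:ℝ) - m)) ≤ 1 := by
    intro k hk
    apply Real.exp_le_one_iff.2
    have : (0:ℝ) ≤ (k:ℝ) - m := by
      have : (m:ℝ) ≤ k := by exact_mod_cast hk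
      linarith
    nlinarith [hED.alpha_pos]
  have hfwd : ∀ ξ : Euc n, ∀ k : ℤ, m ≤ k → ‖(Phi A k m) (P m ξ)‖ ≤ K * ‖ξ‖ := by
    intro ξ k hk
    have hkJ := hm k hk
    have hb := hED.forward m hmJ k hkJ hk
    have h1 : ‖Phi A k m ∘L P m‖ ≤ K :=
      hb.trans (by nlinarith [hexp_le_one k hk])
    calc ‖(Phi A k m) (P m ξ)‖ = ‖(Phi A k m ∘L P m) ξ‖ := rfl
      _ ≤ ‖Phi A k m ∘L P m‖ * ‖ξ‖ := (Phi A k m ∘L P m).le_opNorm ξ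
      _ ≤ K * ‖ξ‖ := mul_le_mul_of_nonneg_right h1 (norm_nonneg _)
  ext ξ
  simp only [Set.mem_setOf_eq, SetLike.mem_coe, LinearMap.mem_range]
  constructor
  · rintro ⟨ζ, hζ⟩
    have hfix : P m ξ = ξ := by rw [← hζ]; exact hPmapp ζ
    exact ⟨K * ‖ξ‖, fun k hk => by have := hfwd ξ k hk; rwa [hfix] at this⟩
  · rintro ⟨C, hC⟩
    have hCnn : ‖ξ‖ ≤ C := by
      have := hC m le_rfl
      rwa [Phi_self] at this
    set η := ξ - P m ξ with hη
    have hker : P m η = 0 := by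
      simp [hη, map_sub, hPmapp]
    have hΦη : ∀ k : ℤ, m ≤ k → ‖Phi A k m η‖ ≤ C + K * ‖ξ‖ := by
      intro k hk
      have : Phi A k m η = Phi A k m ξ - Phi A k m (P m ξ) := by
        simp [hη, map_sub]
      rw [this]
      calc ‖Phi A k m ξ - Phi A k m (P m ξ)‖
          ≤ ‖Phi A k m ξ‖ + ‖Phi A k m (P m ξ)‖ := norm_sub_le _ _
        _ ≤ C + K * ‖ξ‖ := add_le_add (hC k hk) (hfwd ξ k hk)
    have hbound : ∀ k : ℤ, m ≤ k →
        ‖η‖ ≤ K * Real.exp (-α * ((k:ℝ) - m)) * (C + K * ‖ξ‖) := by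
      intro k hk
      have hkJ := hm k hk
      obtain ⟨h1, h2, h3⟩ := hΨ m hmJ k hkJ hk
      have hmem : η ∈ LinearMap.ker (P m : Euc n →ₗ[ℝ] Euc n) := by
        simp [LinearMap.mem_ker, hker]
      have hη_eq : Ψ m k (Phi A k m η) = η := h1 η hmem
      have hker_k : P k (Phi A k m η) = 0 := by
        have hinv := congrArg (fun T : Euc n →L[ℝ] Euc n => T η)
          (hED.invariance m hmJ k hkJ hk)
        simp only [ContinuousLinearMap.comp_apply] at hinv
        rw [← hinv, hker, map_zero]
      have heq : η = (Ψ m k ∘L (1 - P k)) (Phi A k m η) := by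
        rw [ContinuousLinearMap.comp_apply, ContinuousLinearMap.sub_apply,
          ContinuousLinearMap.one_apply, hker_k, sub_zero, hη_eq]
      calc ‖η‖ = ‖(Ψ m k ∘L (1 - P k)) (Phi A k m η)‖ := by rw [← heq]
        _ ≤ ‖Ψ m k ∘L (1 - P k)‖ * ‖Phi A k m η‖ := (Ψ m k ∘L (1 - P k)).le_opNorm _
        _ ≤ (K * Real.exp (-α * ((k:ℝ) - m))) * (C + K * ‖ξ‖) := by
            apply mul_le_mul h3 (hΦη k hk) (norm_nonneg _)
            positivity
    have htend : Filter.Tendsto (fun k : ℤ => K * Real.exp (-α * ((k:ℝ) - m)) * (C + K * ‖ξ‖))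
        Filter.atTop (nhds 0) := by
      have h0 : Filter.Tendsto (fun k : ℤ => ((k:ℝ) - m)) Filter.atTop Filter.atTop :=
        (Filter.tendsto_atTop_add_const_right _ (-(m:ℝ)) tendsto_intCast_atTop_atTop).congr
          (fun k => (sub_eq_add_neg _ _).symm)
      have h1 : Filter.Tendsto (fun k : ℤ => -α * ((k:ℝ) - m)) Filter.atTop Filter.atBot := by
        have h := Filter.tendsto_neg_atTop_atBot.comp (h0.const_mul_atTop hED.alpha_pos)
        exact h.congr (fun k => by simp [Function.comp])
      have h2 : Filter.Tendsto (fun k : ℤ => Real.exp (-α * ((k:ℝ) - m)))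
          Filter.atTop (nhds 0) := Real.tendsto_exp_atBot.comp h1
      have := (h2.const_mul K).mul_const (C + K * ‖ξ‖)
      simpa using this
    have hle : ‖η‖ ≤ 0 := by
      refine ge_of_tendsto htend ?_
      exact Filter.eventually_atTop.2 ⟨m, fun k hk => hbound k hk⟩
    have hη0 : η = 0 := norm_le_zero_iff.mp hle
    exact ⟨ξ, (sub_eq_zero.mp hη0).symm⟩
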